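/- If I is an α-prime C-hyperideal of R and (α(y))ⁿ ⊆ I for some y ∈ R and n ∈ ℕ, then α²(y) ∈ I. -/
import Mathlib


open Pointwise

namespace HyperPaper

/-- A commutative multiplicative hyperring on an additive commutative group:
the hypermultiplication is associative, commutative, subdistributive over `+`,
and compatible with negation. -/
structure MulHyperring (R : Type*) [AddCommGroup R] where
  hmul : R → R → Set R
  nonempty : ∀ a b, (hmul a b).Nonempty
  comm : ∀ a b, hmul a b = hmul b a
  assoc : ∀ a b c, (⋃ t ∈ hmul a b, hmul t c) = ⋃ t ∈ hmul b c, hmul a t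
  distrib : ∀ a b c, hmul a (b + c) ⊆ hmul a b + hmul a c
  hmul_neg : ∀ a b, hmul a (-b) = -(hmul a b)

variable {R : Type*} [AddCommGroup R]

/-- Product of two subsets under the hyperoperation. -/
def MulHyperring.setMul (H : MulHyperring R) (A B : Set R) : Set R :=
  ⋃ a ∈ A, ⋃ b ∈ B, H.hmul a b

/-- `H.hpow a n` is the `(n+1)`-fold hyperproduct `a ∘ a ∘ ⋯ ∘ a`. -/
def MulHyperring.hpow (H : MulHyperring R) (a : R) : ℕ → Set R
  | 0 => {a}
  | n + 1 => H.setMul {a} (H.hpow a n)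

/-- `H.hprod a l` is the hyperproduct of the list `a :: l`. -/
def MulHyperring.hprod (H : MulHyperring R) (a : R) : List R → Set R
  | [] => {a}
  | b :: l => H.setMul {a} (H.hprod b l)

/-- A hyperideal: an additive subgroup absorbing hypermultiplication. -/
structure Hyperideal (H : MulHyperring R) where
  carrier : Set R
  zero_mem : (0 : R) ∈ carrier
  sub_mem : ∀ a b, a ∈ carrier → b ∈ carrier → a - b ∈ carrier
  absorb : ∀ r x, x ∈ carrier → H.hmul r x ⊆ carrier

/-- A C-hyperideal: any finite hyperproduct meeting it is contained in it. -/
def IsCHyperideal (H : MulHyperring R) (I : Hyperideal H) : Prop :=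
  ∀ a (l : List R), (H.hprod a l ∩ I.carrier).Nonempty → H.hprod a l ⊆ I.carrier

/-- A good homomorphism between multiplicative hyperrings. -/
def IsGoodHom {R₁ R₂ : Type*} [AddCommGroup R₁] [AddCommGroup R₂]
    (H₁ : MulHyperring R₁) (H₂ : MulHyperring R₂) (f : R₁ → R₂) : Prop :=
  (∀ x y, f (x + y) = f x + f y) ∧ ∀ x y, f '' H₁.hmul x y = H₂.hmul (f x) (f y)

/-- A good endomorphism. -/
def IsGoodEndo (H : MulHyperring R) (α : R → R) : Prop :=
  IsGoodHom H H α

/-- A proper hyperideal `I` is `α`-prime if `x ∘ y ⊆ I` implies `x ∈ I` or `α y ∈ I`. -/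
def IsAlphaPrime (H : MulHyperring R) (α : R → R) (I : Hyperideal H) : Prop :=
  I.carrier ≠ Set.univ ∧
    ∀ x y, H.hmul x y ⊆ I.carrier → x ∈ I.carrier ∨ α y ∈ I.carrier

/-- A proper hyperideal `I` is prime if `x ∘ y ⊆ I` implies `x ∈ I` or `y ∈ I`. -/
def IsPrime (H : MulHyperring R) (I : Hyperideal H) : Prop :=
  I.carrier ≠ Set.univ ∧
    ∀ x y, H.hmul x y ⊆ I.carrier → x ∈ I.carrier ∨ y ∈ I.carrier

/-- The radical `√S = {r | rⁿ ⊆ S for some n}`. -/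
def radical (H : MulHyperring R) (S : Set R) : Set R :=
  {r | ∃ n : ℕ, H.hpow r n ⊆ S}

/-- The `α`-radical `ᵅ√S = {r | α(rⁿ) ⊆ S for some n}`. -/
def alphaRad (H : MulHyperring R) (α : R → R) (S : Set R) : Set R :=
  {r | ∃ n : ℕ, α '' H.hpow r n ⊆ S}

/-- The set of `α`-nilpotent elements. -/
def nilAlpha (H : MulHyperring R) (α : R → R) : Set R :=
  {x | ∃ n : ℕ, (0 : R) ∈ α '' H.hpow x n}

/-- The `n`-fold set power of a hyperideal carrier: `idealPow H S n = S^(n+1)`. -/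
def idealPow (H : MulHyperring R) (S : Set R) : ℕ → Set R
  | 0 => S
  | n + 1 => H.setMul S (idealPow H S n)

end HyperPaper

open HyperPaper

lemma hpow_eq_hprod {R : Type*} [AddCommGroup R] (H : MulHyperring R) (x : R) (n : ℕ) :
    H.hpow x n = H.hprod x (List.replicate n x) := by
  induction n with
  | zero => rfl
  | succ n ih => simp [MulHyperring.hpow, MulHyperring.hprod, List.replicate, ih]

lemma hpow_nonempty {R : Type*} [AddCommGroup R] (H : MulHyperring R) (x : R) (n : ℕ) :
    (H.hpow x n).Nonempty := by
  induction n with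
  | zero => exact ⟨x, rfl⟩
  | succ n ih =>
    obtain ⟨t, ht⟩ := ih
    obtain ⟨s, hs⟩ := H.nonempty x t
    exact ⟨s, by simp only [MulHyperring.hpow, MulHyperring.setMul, Set.mem_iUnion,
      Set.mem_singleton_iff]; exact ⟨x, rfl, t, ht, hs⟩⟩

/-- If `I` is an `α`-prime C-hyperideal and `(α y)ⁿ ⊆ I`, then
`α² y ∈ I`. -/
theorem stmt7 {R : Type*} [AddCommGroup R] (H : MulHyperring R) (α : R → R)
    (hα : IsGoodEndo H α) (one : R) (hone : ∀ x : R, x ∈ H.hmul one x)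
    (I : Hyperideal H) (hC : IsCHyperideal H I) (hp : IsAlphaPrime H α I)
    (y : R) (n : ℕ) (hy : H.hpow (α y) n ⊆ I.carrier) :
    α (α y) ∈ I.carrier := by
  have hone_not : one ∉ I.carrier := by
    intro h
    apply hp.1
    ext r
    simp only [Set.mem_univ, iff_true]
    exact I.absorb r one h (by rw [H.comm]; exact hone r)
  have hmem : ∀ x : R, x ∈ I.carrier → α x ∈ I.carrier := by
    intro x hx
    have hsub : H.hmul one x ⊆ I.carrier := by
      have h1 : H.hprod one [x] = H.hmul one x := by
        simp [MulHyperring.hprod, MulHyperring.setMul]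
      have := hC one [x] (by rw [h1]; exact ⟨x, hone x, hx⟩)
      rwa [h1] at this
    rcases hp.2 one x hsub with h | h
    · exact absurd h hone_not
    · exact h
  have key : ∀ n : ℕ, ∀ x : R, H.hpow x n ⊆ I.carrier → α x ∈ I.carrier := by
    intro n
    induction n with
    | zero =>
      intro x hx
      exact hmem x (hx rfl)
    | succ n ih =>
      intro x hx
      obtain ⟨t, ht⟩ := hpow_nonempty H x n
      have hxt : H.hmul x t ⊆ I.carrier := by
        intro s hs
        apply hx
        simp only [MulHyperring.hpow, MulHyperring.setMul, Set.mem_iUnion,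
          Set.mem_singleton_iff]
        exact ⟨x, rfl, t, ht, hs⟩
      have htx : H.hmul t x ⊆ I.carrier := by rw [H.comm]; exact hxt
      rcases hp.2 t x htx with h | h
      · -- t ∈ I, so hpow x n meets I, hence ⊆ I by C-hyperideal
        have : H.hpow x n ⊆ I.carrier := by
          rw [hpow_eq_hprod]
          apply hC
          rw [← hpow_eq_hprod]
          exact ⟨t, ht, h⟩
        exact ih x this
      · exact h
  exact key n (α y) hy
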